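/- arXiv:2605.05707 — 4 statements merged into one kernel-verified Lean document; each statement's English description precedes it below -/
import Mathlib

section
/- Let n be a positive natural number, A a real 3 × n matrix, b ∈ ℝ³, α, γ > 0, and let x* ∈ ℝⁿ satisfy the normal equation (γ • I + α • AᵀA) x* = −α • Aᵀ b. If u ∈ ℝ³ satisfies A Aᵀ u = σ² • u for some σ ≥ 0 (u is an eigenvector of A Aᵀ with eigenvalue σ²), then ⟨u, b + A x*⟩ = (γ/(γ + α·σ²)) · ⟨u, b⟩. -/
open Matrix RealInnerProductSpace

/-- Matrix–vector product viewed as a map between Euclidean spaces. -/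
noncomputable def mulVecE {m n : ℕ} (A : Matrix (Fin m) (Fin n) ℝ)
    (x : EuclideanSpace ℝ (Fin n)) : EuclideanSpace ℝ (Fin m) :=
  (WithLp.equiv 2 (Fin m → ℝ)).symm (A.mulVec (WithLp.equiv 2 (Fin n → ℝ) x))

lemma inner_eq_dot {m : ℕ} (x y : EuclideanSpace ℝ (Fin m)) :
    ⟪x, y⟫ = (x : Fin m → ℝ) ⬝ᵥ (y : Fin m → ℝ) := by
  simp [PiLp.inner_apply, dotProduct, RCLike.inner_apply, mul_comm]

theorem stmt7 (n : ℕ) (hn : 0 < n) (A : Matrix (Fin 3) (Fin n) ℝ)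
    (b u : EuclideanSpace ℝ (Fin 3)) (α γ σ : ℝ)
    (hα : 0 < α) (hγ : 0 < γ) (hσ : 0 ≤ σ)
    (xstar : EuclideanSpace ℝ (Fin n))
    (hnormal : mulVecE (γ • (1 : Matrix (Fin n) (Fin n) ℝ) + α • (Aᵀ * A)) xstar
        = (-α) • mulVecE Aᵀ b)
    (heig : mulVecE (A * Aᵀ) u = (σ ^ 2) • u) :
    ⟪u, b + mulVecE A xstar⟫ = (γ / (γ + α * σ ^ 2)) * ⟪u, b⟫ := by
  have hpos : 0 < γ + α * σ ^ 2 := by positivity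
  set u' : Fin 3 → ℝ := (u : Fin 3 → ℝ) with hu'
  set b' : Fin 3 → ℝ := (b : Fin 3 → ℝ) with hb'
  set x' : Fin n → ℝ := (xstar : Fin n → ℝ) with hx'
  have h1 : γ • x' + α • ((Aᵀ * A) *ᵥ x') = (-α) • (Aᵀ *ᵥ b') := by
    have := congrArg (fun v : EuclideanSpace ℝ (Fin n) => (v : Fin n → ℝ)) hnormal
    simpa [mulVecE, Matrix.add_mulVec, Matrix.smul_mulVec, Matrix.one_mulVec]
      using this
  have h2 : (A * Aᵀ) *ᵥ u' = (σ ^ 2) • u' := by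
    have := congrArg (fun v : EuclideanSpace ℝ (Fin 3) => (v : Fin 3 → ℝ)) heig
    simpa [mulVecE] using this
  -- apply A to h1
  have h3 : γ • (A *ᵥ x') + α • ((A * Aᵀ) *ᵥ (A *ᵥ x')) = (-α) • ((A * Aᵀ) *ᵥ b') := by
    have e := congrArg A.mulVec h1
    simp only [Matrix.mulVec_add, Matrix.mulVec_smul, Matrix.mulVec_mulVec] at e
    rw [← Matrix.mul_assoc] at e
    rw [Matrix.mulVec_mulVec]
    exact e
  -- symmetry: u ⬝ (AAᵀ w) = σ² (u ⬝ w)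
  have hsym : ∀ w : Fin 3 → ℝ, u' ⬝ᵥ ((A * Aᵀ) *ᵥ w) = σ ^ 2 * (u' ⬝ᵥ w) := by
    intro w
    have : u' ⬝ᵥ ((A * Aᵀ) *ᵥ w) = ((A * Aᵀ)ᵀ *ᵥ u') ⬝ᵥ w := by
      rw [Matrix.mulVec_transpose, Matrix.dotProduct_mulVec]
    rw [this, Matrix.transpose_mul, Matrix.transpose_transpose, h2,
      smul_dotProduct, smul_eq_mul]
  have h4 : γ * (u' ⬝ᵥ (A *ᵥ x')) + α * (σ ^ 2 * (u' ⬝ᵥ (A *ᵥ x')))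
      = (-α) * (σ ^ 2 * (u' ⬝ᵥ b')) := by
    have e := congrArg (fun v => u' ⬝ᵥ v) h3
    simp only [dotProduct_add, dotProduct_smul, hsym, smul_eq_mul] at e
    exact e
  have hib : ⟪u, b⟫ = u' ⬝ᵥ b' := inner_eq_dot u b
  have hgoal : ⟪u, b + mulVecE A xstar⟫ = u' ⬝ᵥ b' + u' ⬝ᵥ (A *ᵥ x') := by
    rw [inner_eq_dot]
    show u' ⬝ᵥ (b' + A *ᵥ x') = _
    rw [dotProduct_add]
  rw [hgoal, hib]
  set P := u' ⬝ᵥ b'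
  set Q := u' ⬝ᵥ (A *ᵥ x')
  rw [div_mul_eq_mul_div, eq_div_iff hpos.ne']
  linear_combination h4
end

section
/- Let n be a positive natural number, A a real 3 × n matrix, b ∈ ℝ³, α, γ > 0, and let x* satisfy (γ • I + α • AᵀA) x* = −α • Aᵀ b. Suppose there exists σ₃ > 0 such that ‖Aᵀ v‖ ≥ σ₃ · ‖v‖ for all v ∈ ℝ³ (i.e. the smallest eigenvalue of A Aᵀ is at least σ₃²). Then the residual satisfies ‖b + A x*‖ ≤ (γ/(γ + α·σ₃²)) · ‖b‖ ≤ (γ/(α·σ₃²)) · ‖b‖. In particular ‖b + A x*‖ → 0 as α → ∞ at rate O(1/α). -/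
open Matrix Filter

lemma mulVecE_add {m n : ℕ} (B C : Matrix (Fin m) (Fin n) ℝ) (x : EuclideanSpace ℝ (Fin n)) :
    mulVecE (B + C) x = mulVecE B x + mulVecE C x := by
  simp [mulVecE, Matrix.add_mulVec]

lemma mulVecE_smul {m n : ℕ} (c : ℝ) (B : Matrix (Fin m) (Fin n) ℝ) (x : EuclideanSpace ℝ (Fin n)) :
    mulVecE (c • B) x = c • mulVecE B x := by
  simp [mulVecE, Matrix.smul_mulVec]

lemma mulVecE_mul {m n k : ℕ} (B : Matrix (Fin m) (Fin n) ℝ) (C : Matrix (Fin n) (Fin k) ℝ)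
    (x : EuclideanSpace ℝ (Fin k)) : mulVecE (B * C) x = mulVecE B (mulVecE C x) := by
  simp [mulVecE, Matrix.mulVec_mulVec]

lemma mulVecE_one {n : ℕ} (x : EuclideanSpace ℝ (Fin n)) :
    mulVecE (1 : Matrix (Fin n) (Fin n) ℝ) x = x := by
  simp [mulVecE]

lemma mulVecE_vec_add {m n : ℕ} (B : Matrix (Fin m) (Fin n) ℝ) (x y : EuclideanSpace ℝ (Fin n)) :
    mulVecE B (x + y) = mulVecE B x + mulVecE B y := by
  simp [mulVecE, Matrix.mulVec_add]

lemma mulVecE_vec_smul {m n : ℕ} (c : ℝ) (B : Matrix (Fin m) (Fin n) ℝ)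
    (x : EuclideanSpace ℝ (Fin n)) : mulVecE B (c • x) = c • mulVecE B x := by
  simp [mulVecE, Matrix.mulVec_smul]

lemma inner_mulVecE {m n : ℕ} (B : Matrix (Fin m) (Fin n) ℝ) (x : EuclideanSpace ℝ (Fin n))
    (y : EuclideanSpace ℝ (Fin m)) :
    inner ℝ (mulVecE B x) y = (inner ℝ x (mulVecE Bᵀ y) : ℝ) := by
  simp only [mulVecE, PiLp.inner_apply, RCLike.inner_apply, conj_trivial]
  simp [Matrix.mulVec, dotProduct, Finset.sum_mul, Finset.mul_sum]
  rw [Finset.sum_comm]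
  apply Finset.sum_congr rfl; intros; apply Finset.sum_congr rfl; intros; ring

lemma key_bound (n : ℕ) (A : Matrix (Fin 3) (Fin n) ℝ)
    (b : EuclideanSpace ℝ (Fin 3)) (γ σ₃ : ℝ) (hγ : 0 < γ) (hσ₃ : 0 < σ₃)
    (hA : ∀ v : EuclideanSpace ℝ (Fin 3), σ₃ * ‖v‖ ≤ ‖mulVecE Aᵀ v‖)
    (α : ℝ) (hα : 0 < α) (xstar : EuclideanSpace ℝ (Fin n))
    (heq : mulVecE (γ • (1 : Matrix (Fin n) (Fin n) ℝ) + α • (Aᵀ * A)) xstar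
      = (-α) • mulVecE Aᵀ b) :
    ‖b + mulVecE A xstar‖ ≤ (γ / (γ + α * σ₃ ^ 2)) * ‖b‖ := by
  set r : EuclideanSpace ℝ (Fin 3) := b + mulVecE A xstar with hr
  have hpos : 0 < γ + α * σ₃ ^ 2 := by positivity
  -- γ • xstar = (-α) • Aᵀ r
  have h1 : γ • xstar = (-α) • mulVecE Aᵀ r := by
    rw [mulVecE_add, mulVecE_smul, mulVecE_smul, mulVecE_one, mulVecE_mul] at heq
    rw [hr, mulVecE_vec_add, smul_add]
    have : γ • xstar = (-α) • mulVecE Aᵀ b - α • mulVecE Aᵀ (mulVecE A xstar) := by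
      rw [← heq]; abel
    rw [this]; module
  -- γ • r = γ • b + (-α) • A Aᵀ r
  have h2 : γ • r = γ • b + (-α) • mulVecE A (mulVecE Aᵀ r) := by
    rw [hr, smul_add, ← mulVecE_vec_smul, h1, mulVecE_vec_smul]
  -- inner with r
  have h3 : γ * ‖r‖ ^ 2 + α * ‖mulVecE Aᵀ r‖ ^ 2 = γ * inner ℝ b r := by
    have := congrArg (fun v : EuclideanSpace ℝ (Fin 3) => (inner ℝ v r : ℝ)) h2
    simp only [inner_add_left, real_inner_smul_left, inner_mulVecE,
      real_inner_self_eq_norm_sq] at this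
    linarith
  have h4 : α * (σ₃ * ‖r‖) ^ 2 ≤ α * ‖mulVecE Aᵀ r‖ ^ 2 := by
    apply mul_le_mul_of_nonneg_left _ hα.le
    exact pow_le_pow_left₀ (by positivity) (hA r) 2
  have h5 : (inner ℝ b r : ℝ) ≤ ‖b‖ * ‖r‖ := real_inner_le_norm b r
  have h6 : (γ + α * σ₃ ^ 2) * ‖r‖ ^ 2 ≤ γ * (‖b‖ * ‖r‖) := by nlinarith
  rcases eq_or_lt_of_le (norm_nonneg r) with h | h
  · rw [← h]; positivity
  · rw [div_mul_eq_mul_div, le_div_iff₀ hpos]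
    have h7 : (‖r‖ * (γ + α * σ₃ ^ 2)) * ‖r‖ ≤ (γ * ‖b‖) * ‖r‖ := by nlinarith
    exact le_of_mul_le_mul_right h7 h

theorem stmt8 (n : ℕ) (hn : 0 < n) (A : Matrix (Fin 3) (Fin n) ℝ)
    (b : EuclideanSpace ℝ (Fin 3)) (γ σ₃ : ℝ) (hγ : 0 < γ) (hσ₃ : 0 < σ₃)
    (hA : ∀ v : EuclideanSpace ℝ (Fin 3), σ₃ * ‖v‖ ≤ ‖mulVecE Aᵀ v‖) :
    (∀ α : ℝ, 0 < α →
      ∀ xstar : EuclideanSpace ℝ (Fin n),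
        mulVecE (γ • (1 : Matrix (Fin n) (Fin n) ℝ) + α • (Aᵀ * A)) xstar
            = (-α) • mulVecE Aᵀ b →
          ‖b + mulVecE A xstar‖ ≤ (γ / (γ + α * σ₃ ^ 2)) * ‖b‖ ∧
          (γ / (γ + α * σ₃ ^ 2)) * ‖b‖ ≤ (γ / (α * σ₃ ^ 2)) * ‖b‖) ∧
    ∀ x : ℝ → EuclideanSpace ℝ (Fin n),
      (∀ α : ℝ, 0 < α →
        mulVecE (γ • (1 : Matrix (Fin n) (Fin n) ℝ) + α • (Aᵀ * A)) (x α)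
          = (-α) • mulVecE Aᵀ b) →
      Tendsto (fun α : ℝ => ‖b + mulVecE A (x α)‖) atTop (nhds 0) := by
  constructor
  · intro α hα xstar heq
    refine ⟨key_bound n A b γ σ₃ hγ hσ₃ hA α hα xstar heq, ?_⟩
    apply mul_le_mul_of_nonneg_right _ (norm_nonneg b)
    apply div_le_div_of_nonneg_left hγ.le (by positivity) (by linarith)
  · intro x hx
    have hb : Tendsto (fun α : ℝ => (γ / (γ + α * σ₃ ^ 2)) * ‖b‖) atTop (nhds 0) := by
      rw [show (0 : ℝ) = 0 * ‖b‖ by ring]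
      apply Tendsto.mul_const
      apply Tendsto.div_atTop tendsto_const_nhds
      exact tendsto_atTop_add_const_left _ γ (Tendsto.atTop_mul_const (by positivity) tendsto_id)
    apply squeeze_zero' (Filter.Eventually.of_forall fun α => norm_nonneg _) _ hb
    filter_upwards [eventually_gt_atTop 0] with α hα
    exact key_bound n A b γ σ₃ hγ hσ₃ hA α hα (x α) (hx α hα)
end

section
/- Let m, g, h > 0 and let a, c, p, F ∈ ℝ³ satisfy ⟨e₃, c − p⟩ = h, F = (m·g/h) • (c − p) (the pendular force), and m • a = F − (m·g) • e₃ (Newton's law with gravity −g·e₃). Then for i ∈ {1, 2}, the i-th coordinate of c − (h/g) • a equals the i-th coordinate of p; that is, the zero-moment point c_xy − (h/g)·a_xy coincides with the horizontal projection p_xy of the virtual pivot. -/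
open RealInnerProductSpace

/-- The third standard basis vector of `ℝ³`. -/
noncomputable def e3 : EuclideanSpace ℝ (Fin 3) := EuclideanSpace.single 2 1

theorem stmt9 (m g h : ℝ) (hm : 0 < m) (hg : 0 < g) (hh : 0 < h)
    (a c p F : EuclideanSpace ℝ (Fin 3))
    (hcp : ⟪e3, c - p⟫ = h)
    (hF : F = (m * g / h) • (c - p))
    (hnewton : m • a = F - (m * g) • e3) :
    (c - (h / g) • a) 0 = p 0 ∧ (c - (h / g) • a) 1 = p 1 := by
  have key : ∀ i : Fin 3, i ≠ 2 → (c - (h / g) • a) i = p i := by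
    intro i hi
    have h1 := congrFun (congrArg (fun v : EuclideanSpace ℝ (Fin 3) => (v : Fin 3 → ℝ)) hnewton) i
    simp only [hF, PiLp.smul_apply, PiLp.sub_apply, smul_eq_mul] at h1
    have he3 : e3 i = 0 := by
      simp [e3, EuclideanSpace.single_apply, hi]
    rw [he3] at h1
    have hai : a i = (g / h) * (c i - p i) := by
      have hm' := hm.ne'
      field_simp at h1 ⊢
      have := mul_left_cancel₀ hm' (show m * (a i * h) = m * (g * (c i - p i)) by rw [h1]; ring)
      linarith
    simp only [PiLp.sub_apply, PiLp.smul_apply, smul_eq_mul, hai]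
    field_simp
    ring
  exact ⟨key 0 (by decide), key 1 (by decide)⟩
end

section
/- Let ω > 0, let p : ℝ → ℝ² be any function, and let c, v : ℝ → ℝ² be such that for every t, c has derivative v at t (HasDerivAt c (v t) t) and v has derivative ω² • (c t − p t) at t (i.e. c̈(t) = ω²·(c(t) − p(t))). Define ξ(t) = c(t) + ω⁻¹ • v(t). Then for every t, ξ has derivative ω • (ξ(t) − p(t)) at t. -/
theorem stmt10 (ω : ℝ) (hω : 0 < ω) (p c v : ℝ → EuclideanSpace ℝ (Fin 2))
    (hc : ∀ t : ℝ, HasDerivAt c (v t) t)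
    (hv : ∀ t : ℝ, HasDerivAt v ((ω ^ 2) • (c t - p t)) t)
    (ξ : ℝ → EuclideanSpace ℝ (Fin 2))
    (hξ : ξ = fun t => c t + ω⁻¹ • v t) :
    ∀ t : ℝ, HasDerivAt ξ (ω • (ξ t - p t)) t := by
  intro t
  subst hξ
  have h := (hc t).add (((hv t)).const_smul (ω⁻¹))
  refine h.congr_deriv ?_
  have hne : ω ≠ 0 := ne_of_gt hω
  simp only [smul_sub, smul_add, smul_smul]
  rw [show ω * ω⁻¹ = 1 by field_simp, show ω⁻¹ * ω ^ 2 = ω by field_simp]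
  simp [one_smul]
  module
end
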